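/- Let n ≥ 5 be odd and let W ⊆ V(H_n) contain at least n−1 vertices of the row R_0 = {0,…,n−1} × {0}. Then the graph H_n(W) obtained by replicating W is not 4-colourable. -/

import Mathlib

/-- Replicating a set `W` of vertices of `G`: each `w ∈ W` gets a clone (the
corresponding element of `Sum.inr`) adjacent to `w` and to all its neighbours. -/
def SimpleGraph.replicateSet {V : Type} (G : SimpleGraph V) (W : Set V) :
    SimpleGraph (V ⊕ W) where
  Adj x y :=
    match x, y with
    | Sum.inl a, Sum.inl b => G.Adj a b
    | Sum.inl a, Sum.inr b => G.Adj a (b : V) ∨ a = (b : V)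
    | Sum.inr a, Sum.inl b => G.Adj (a : V) b ∨ (a : V) = b
    | Sum.inr a, Sum.inr b => G.Adj (a : V) (b : V)
  symm := by
    constructor
    rintro (a | a) (b | b) h <;> simp only at h ⊢ <;>
      first
        | exact G.adj_symm h
        | (rcases h with h | h
           · exact Or.inl (G.adj_symm h)
           · exact Or.inr h.symm)
  loopless := by
    constructor
    rintro (a | a) h <;> simp only at h <;> exact G.irrefl h

/-- Gallai's graph `H n`: the Cartesian product of the path on `Fin n` with the
triangle on `ZMod 3`, together with the three twist edges joining `(0, j)` to
`(n-1, -j)`. -/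
def Hgraph (n : ℕ) : SimpleGraph (Fin n × ZMod 3) :=
  SimpleGraph.fromRel (fun x y =>
    (x.1 = y.1 ∧ x.2 ≠ y.2) ∨
    ((x.1 : ℕ) + 1 = (y.1 : ℕ) ∧ x.2 = y.2) ∨
    ((x.1 : ℕ) = 0 ∧ (y.1 : ℕ) = n - 1 ∧ y.2 = -x.2))

/-- `G` is `k`-critical: `χ(G) = k` and deleting any vertex leaves a
`(k-1)`-colourable graph. -/
def SimpleGraph.IsCrit {V : Type} (G : SimpleGraph V) (k : ℕ) : Prop :=
  G.chromaticNumber = k ∧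
    ∀ v : V, (SimpleGraph.induce {u | u ≠ v} G).Colorable (k - 1)

set_option synthInstance.maxHeartbeats 1000000 in
set_option synthInstance.maxSize 2000 in
set_option maxHeartbeats 4000000 in
set_option maxRecDepth 100000 in
/-- The key finite fact: in a proper 4-colouring, if two adjacent triangle
columns both carry a clone of their row-0 vertex, then the row-{1,2} colour
pair of the second column is the complement of that of the first. -/
lemma key4 : ∀ a u v e a' u' v' e' : Fin 4,
    (a ≠ u ∧ a ≠ v ∧ u ≠ v ∧ e ≠ a ∧ e ≠ u ∧ e ≠ v) →
    (a' ≠ u' ∧ a' ≠ v' ∧ u' ≠ v' ∧ e' ≠ a' ∧ e' ≠ u' ∧ e' ≠ v') →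
    a ≠ a' → ((u ≠ u' ∧ v ≠ v') ∨ (u ≠ v' ∧ v ≠ u')) →
    e ≠ a' → e' ≠ a → e ≠ e' →
    ∀ x : Fin 4, ((x = u' ∨ x = v') ↔ ¬ (x = u ∨ x = v)) := by
  decide

set_option maxRecDepth 100000 in
/-- Pigeonhole over four colours. -/
lemma pig4 : ∀ a u v e x : Fin 4,
    (a ≠ u ∧ a ≠ v ∧ u ≠ v ∧ e ≠ a ∧ e ≠ u ∧ e ≠ v) →
    x ≠ a → x ≠ e → (x = u ∨ x = v) := by decide

/-- Alternation along a path. -/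
lemma alt_gen (P : ℕ → Prop) (m : ℕ) (step : ∀ k, k < m → (P (k + 1) ↔ ¬ P k)) :
    ∀ k, k ≤ m → (P k ↔ (Even k ↔ P 0)) := by
  intro k
  induction k with
  | zero => intro _; simp
  | succ j ih =>
    intro hk
    rw [Nat.even_add_one, step j (by omega), ih (by omega)]
    tauto

/-- If `n ≥ 5` is odd and `W` contains at least `n - 1` vertices of the row
`R₀ = {0,…,n-1} × {0}`, then the replicated graph is not 4-colourable. -/
theorem replicate_row_zero_odd (n : ℕ) (hn : 5 ≤ n) (hodd : Odd n)
    (W : Set (Fin n × ZMod 3))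
    (h : n - 1 ≤ (W ∩ {v | v.2 = 0}).ncard) :
    ¬ ((Hgraph n).replicateSet W).Colorable 4 := by
  intro hcol
  obtain ⟨C⟩ := hcol
  have npos : 0 < n := by omega
  -- there is at most one row-0 vertex outside `W`
  obtain ⟨i₀, hW0⟩ : ∃ i₀ : Fin n, ∀ i : Fin n, i ≠ i₀ → ((i, (0 : ZMod 3)) ∈ W) := by
    by_contra hcon
    push_neg at hcon
    obtain ⟨a, -, haW⟩ := hcon ⟨0, npos⟩
    obtain ⟨b, hba, hbW⟩ := hcon a
    have hsub : W ∩ {v : Fin n × ZMod 3 | v.2 = 0} ⊆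
        (fun i : Fin n => (i, (0 : ZMod 3))) '' ({a, b}ᶜ) := by
      rintro ⟨i, j⟩ ⟨hiW, hj⟩
      simp only [Set.mem_setOf_eq] at hj
      subst hj
      refine ⟨i, ?_, rfl⟩
      simp only [Set.mem_compl_iff, Set.mem_insert_iff, Set.mem_singleton_iff]
      rintro (rfl | rfl)
      · exact haW hiW
      · exact hbW hiW
    have hinj : Function.Injective (fun i : Fin n => (i, (0 : ZMod 3))) := by
      intro x y hxy
      exact (Prod.ext_iff.mp hxy).1
    have hcard := Set.ncard_le_ncard hsub (Set.toFinite _)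
    rw [Set.ncard_image_of_injective _ hinj] at hcard
    have h2 : ({a, b} : Set (Fin n)).ncard = 2 := Set.ncard_pair (Ne.symm hba)
    have hcompl := Set.ncard_add_ncard_compl ({a, b} : Set (Fin n))
    rw [h2, Nat.card_eq_fintype_card, Fintype.card_fin] at hcompl
    omega
  -- adjacency helpers in `Hgraph n`
  have tri : ∀ (i : Fin n) (j j' : ZMod 3), j ≠ j' →
      (Hgraph n).Adj (i, j) (i, j') := by
    intro i j j' hjj
    exact (SimpleGraph.fromRel_adj _ _ _).mpr
      ⟨fun hEq => hjj (Prod.ext_iff.mp hEq).2, Or.inl (Or.inl ⟨rfl, hjj⟩)⟩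
  have rowadj : ∀ (i i' : Fin n) (j : ZMod 3), (i : ℕ) + 1 = (i' : ℕ) →
      (Hgraph n).Adj (i, j) (i', j) := by
    intro i i' j hii
    refine (SimpleGraph.fromRel_adj _ _ _).mpr
      ⟨fun hEq => ?_, Or.inl (Or.inr (Or.inl ⟨hii, rfl⟩))⟩
    have h' : i = i' := congrArg Prod.fst hEq
    have := congrArg Fin.val h'
    omega
  have twistadj : ∀ (i i' : Fin n) (j : ZMod 3), (i : ℕ) = 0 → (i' : ℕ) = n - 1 →
      (Hgraph n).Adj (i, j) (i', -j) := by
    intro i i' j h0 h1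
    refine (SimpleGraph.fromRel_adj _ _ _).mpr
      ⟨fun hEq => ?_, Or.inl (Or.inr (Or.inr ⟨h0, h1, rfl⟩))⟩
    have h' : i = i' := congrArg Prod.fst hEq
    have := congrArg Fin.val h'
    omega
  -- colouring helpers
  have hc : ∀ {p q : Fin n × ZMod 3}, (Hgraph n).Adj p q →
      C (Sum.inl p) ≠ C (Sum.inl q) := fun hpq => C.valid hpq
  have hclone : ∀ (p w : Fin n × ZMod 3) (hw : w ∈ W),
      ((Hgraph n).Adj p w ∨ p = w) → C (Sum.inl p) ≠ C (Sum.inr ⟨w, hw⟩) :=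
    fun _ _ _ hadj => C.valid hadj
  have hclone2 : ∀ (w w' : Fin n × ZMod 3) (hw : w ∈ W) (hw' : w' ∈ W),
      (Hgraph n).Adj w w' → C (Sum.inr ⟨w, hw⟩) ≠ C (Sum.inr ⟨w', hw'⟩) :=
    fun _ _ _ _ hadj => C.valid hadj
  have hz01 : (0 : ZMod 3) ≠ 1 := by decide
  have hz02 : (0 : ZMod 3) ≠ 2 := by decide
  have hz12 : (1 : ZMod 3) ≠ 2 := by decide
  have hneg0 : (-0 : ZMod 3) = 0 := by decide
  have hneg1 : (-1 : ZMod 3) = 2 := by decide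
  have hneg2 : (-2 : ZMod 3) = 1 := by decide
  -- the column pack of distinctness facts at a cloned column
  have colpack : ∀ (i : Fin n) (hw : (i, (0 : ZMod 3)) ∈ W),
      C (Sum.inl (i, 0)) ≠ C (Sum.inl (i, 1)) ∧
      C (Sum.inl (i, 0)) ≠ C (Sum.inl (i, 2)) ∧
      C (Sum.inl (i, 1)) ≠ C (Sum.inl (i, 2)) ∧
      C (Sum.inr ⟨(i, 0), hw⟩) ≠ C (Sum.inl (i, 0)) ∧
      C (Sum.inr ⟨(i, 0), hw⟩) ≠ C (Sum.inl (i, 1)) ∧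
      C (Sum.inr ⟨(i, 0), hw⟩) ≠ C (Sum.inl (i, 2)) := by
    intro i hw
    exact ⟨hc (tri i 0 1 hz01), hc (tri i 0 2 hz02), hc (tri i 1 2 hz12),
      (hclone (i, 0) (i, 0) hw (Or.inr rfl)).symm,
      (hclone (i, 1) (i, 0) hw (Or.inl (tri i 1 0 hz01.symm))).symm,
      (hclone (i, 2) (i, 0) hw (Or.inl (tri i 2 0 hz02.symm))).symm⟩
  -- the strong step
  have strong : ∀ (i j : Fin n) (hiW : (i, (0 : ZMod 3)) ∈ W)
      (hjW : (j, (0 : ZMod 3)) ∈ W),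
      (((i : ℕ) + 1 = (j : ℕ)) ∨ ((j : ℕ) = 0 ∧ (i : ℕ) = n - 1)) →
      ∀ x : Fin 4,
        ((x = C (Sum.inl (j, 1)) ∨ x = C (Sum.inl (j, 2))) ↔
          ¬ (x = C (Sum.inl (i, 1)) ∨ x = C (Sum.inl (i, 2)))) := by
    intro i j hiW hjW hrel
    rcases hrel with hnorm | ⟨hj0, hin⟩
    · have hadj00 : (Hgraph n).Adj (i, 0) (j, 0) := rowadj i j 0 hnorm
      exact key4 _ _ _ _ _ _ _ _ (colpack i hiW) (colpack j hjW)
        (hc hadj00)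
        (Or.inl ⟨hc (rowadj i j 1 hnorm), hc (rowadj i j 2 hnorm)⟩)
        ((hclone (j, 0) (i, 0) hiW (Or.inl hadj00.symm)).symm)
        ((hclone (i, 0) (j, 0) hjW (Or.inl hadj00)).symm)
        (hclone2 _ _ hiW hjW hadj00)
    · -- twist step : j is column 0, i is column n-1
      have hadj00 : (Hgraph n).Adj (j, 0) (i, 0) := by
        have := twistadj j i 0 hj0 hin
        rwa [hneg0] at this
      have hadj12 : (Hgraph n).Adj (j, 1) (i, 2) := by
        have := twistadj j i 1 hj0 hin
        rwa [hneg1] at this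
      have hadj21 : (Hgraph n).Adj (j, 2) (i, 1) := by
        have := twistadj j i 2 hj0 hin
        rwa [hneg2] at this
      exact key4 _ _ _ _ _ _ _ _ (colpack i hiW) (colpack j hjW)
        (hc hadj00.symm)
        (Or.inr ⟨(hc hadj21).symm, (hc hadj12).symm⟩)
        ((hclone (j, 0) (i, 0) hiW (Or.inl hadj00)).symm)
        ((hclone (i, 0) (j, 0) hjW (Or.inl hadj00.symm)).symm)
        (hclone2 _ _ hiW hjW hadj00.symm)
  -- the cyclic walk starting just after i₀
  let f : ℕ → Fin n := fun k => ⟨((i₀ : ℕ) + 1 + k) % n, Nat.mod_lt _ npos⟩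
  have hfval : ∀ k : ℕ, (f k : ℕ) = ((i₀ : ℕ) + 1 + k) % n := fun _ => rfl
  have hi₀lt : (i₀ : ℕ) < n := i₀.isLt
  have hfne : ∀ k : ℕ, k ≤ n - 2 → f k ≠ i₀ := by
    intro k hk hEq
    have hmod := congrArg Fin.val hEq
    rw [hfval] at hmod
    rcases Nat.lt_or_ge ((i₀ : ℕ) + 1 + k) n with hlt | hge
    · rw [Nat.mod_eq_of_lt hlt] at hmod; omega
    · rw [Nat.mod_eq_sub_mod hge, Nat.mod_eq_of_lt (by omega)] at hmod; omega
  have hstep : ∀ k : ℕ, ((f k : ℕ) + 1 = (f (k + 1) : ℕ)) ∨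
      ((f (k + 1) : ℕ) = 0 ∧ (f k : ℕ) = n - 1) := by
    intro k
    rw [hfval, hfval]
    have hone : 1 % n = 1 := Nat.mod_eq_of_lt (by omega)
    have h1 : ((i₀ : ℕ) + 1 + (k + 1)) % n = (((i₀ : ℕ) + 1 + k) % n + 1) % n := by
      rw [show (i₀ : ℕ) + 1 + (k + 1) = ((i₀ : ℕ) + 1 + k) + 1 by ring,
        Nat.add_mod ((i₀ : ℕ) + 1 + k) 1 n, hone]
    have hr : ((i₀ : ℕ) + 1 + k) % n < n := Nat.mod_lt _ npos
    rcases Nat.lt_or_ge (((i₀ : ℕ) + 1 + k) % n + 1) n with hlt | hge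
    · left; rw [h1, Nat.mod_eq_of_lt hlt]
    · right
      have hreq : ((i₀ : ℕ) + 1 + k) % n = n - 1 := by omega
      refine ⟨?_, hreq⟩
      rw [h1, hreq, show n - 1 + 1 = n by omega, Nat.mod_self]
  have hlast : f (n - 1) = i₀ := by
    apply Fin.ext
    rw [hfval, show (i₀ : ℕ) + 1 + (n - 1) = (i₀ : ℕ) + n by omega,
      Nat.add_mod_right, Nat.mod_eq_of_lt hi₀lt]
  -- the colour of the possibly-uncloned vertex
  set x₀ : Fin 4 := C (Sum.inl (i₀, 0)) with hx₀
  -- alternation of membership of x₀ in the side pairs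
  have step : ∀ k, k < n - 2 →
      ((x₀ = C (Sum.inl (f (k + 1), 1)) ∨ x₀ = C (Sum.inl (f (k + 1), 2))) ↔
        ¬ (x₀ = C (Sum.inl (f k, 1)) ∨ x₀ = C (Sum.inl (f k, 2)))) := by
    intro k hk
    exact strong (f k) (f (k + 1)) (hW0 _ (hfne k (by omega)))
      (hW0 _ (hfne (k + 1) (by omega))) (hstep k) x₀
  have alt := alt_gen (fun k => (x₀ = C (Sum.inl (f k, 1)) ∨ x₀ = C (Sum.inl (f k, 2))))
    (n - 2) step
  -- x₀ belongs to the side pair of the first column of the walk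
  have hWf0 : (f 0, (0 : ZMod 3)) ∈ W := hW0 _ (hfne 0 (by omega))
  have hrel0 : (((i₀ : ℕ) + 1 = (f 0 : ℕ)) ∨ ((f 0 : ℕ) = 0 ∧ (i₀ : ℕ) = n - 1)) := by
    rw [hfval, Nat.add_zero]
    rcases Nat.lt_or_ge ((i₀ : ℕ) + 1) n with hlt | hge
    · left; rw [Nat.mod_eq_of_lt hlt]
    · right
      have : (i₀ : ℕ) + 1 = n := by omega
      rw [this, Nat.mod_self]
      omega
  have hadj0 : (Hgraph n).Adj (i₀, 0) (f 0, 0) := by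
    rcases hrel0 with hnorm | ⟨h0, h1⟩
    · exact rowadj i₀ (f 0) 0 hnorm
    · have := twistadj (f 0) i₀ 0 h0 h1
      rw [hneg0] at this
      exact this.symm
  have hP0 : x₀ = C (Sum.inl (f 0, 1)) ∨ x₀ = C (Sum.inl (f 0, 2)) :=
    pig4 _ _ _ _ _ (colpack (f 0) hWf0) (hc hadj0)
      (hclone (i₀, 0) (f 0, 0) hWf0 (Or.inl hadj0))
  -- x₀ belongs to the side pair of the last column of the walk
  have hWfl : (f (n - 2), (0 : ZMod 3)) ∈ W := hW0 _ (hfne (n - 2) le_rfl)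
  have hrell : (((f (n - 2) : ℕ) + 1 = (i₀ : ℕ)) ∨
      ((i₀ : ℕ) = 0 ∧ (f (n - 2) : ℕ) = n - 1)) := by
    have hst := hstep (n - 2)
    rw [show n - 2 + 1 = n - 1 by omega, hlast] at hst
    exact hst
  have hadjl : (Hgraph n).Adj (f (n - 2), 0) (i₀, 0) := by
    rcases hrell with hnorm | ⟨h0, h1⟩
    · exact rowadj (f (n - 2)) i₀ 0 hnorm
    · have := twistadj i₀ (f (n - 2)) 0 h0 h1
      rw [hneg0] at this
      exact this.symm
  have hPl : x₀ = C (Sum.inl (f (n - 2), 1)) ∨ x₀ = C (Sum.inl (f (n - 2), 2)) :=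
    pig4 _ _ _ _ _ (colpack (f (n - 2)) hWfl) (hc hadjl.symm)
      (hclone (i₀, 0) (f (n - 2), 0) hWfl (Or.inl hadjl.symm))
  -- contradiction with n odd
  have hev : Even (n - 2) := ((alt (n - 2) le_rfl).mp hPl).mpr hP0
  obtain ⟨m, hm⟩ := hodd
  obtain ⟨t, ht⟩ := hev
  omega
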